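/- Let g be ρ-weakly convex, C the indicator of a closed convex set X ⊆ ℝ^d, φ = g + indicator of X, ρ̂ > ρ, α > 0, and x ∈ X. Let x̂ = prox_{φ/ρ̂}(x), and ζ ∈ ∂g(x) with ‖ζ‖ ≤ L. Then for x⁺ = proj_X(x - αζ): φ_{1/ρ̂}(x⁺) ≤ φ_{1/ρ̂}(x) + ρ̂α(g(x̂) - g(x) + (ρ/2)‖x - x̂‖²) + (α²ρ̂/2)L². -/

import Mathlib

set_option maxHeartbeats 1000000 in
/-- One-step envelope decrease for the projected subgradient step (inequality (2.2)–(2.5)):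
with `φ = g + δ_X`, `x̂ = prox_{φ/ρ̂}(x)`, `ζ ∈ ∂g(x)`, `‖ζ‖ ≤ L`, and
`x⁺ = proj_X(x - αζ)`, one has
`φ_{1/ρ̂}(x⁺) ≤ φ_{1/ρ̂}(x) + ρ̂α(g(x̂) - g(x) + (ρ/2)‖x - x̂‖²) + (α²ρ̂/2)L²`,
where the envelope values are witnessed by their (attained) minimizers over `X`. -/
theorem projected_step_envelope_decrease {d : ℕ}
    (g : EuclideanSpace ℝ (Fin d) → ℝ) (ρ ρhat α L : ℝ)
    (hρ : 0 ≤ ρ) (hρhat : ρ < ρhat) (hα : 0 < α) (hL : 0 ≤ L)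
    (hwc : ConvexOn ℝ Set.univ (fun x => g x + ρ / 2 * ‖x‖ ^ 2))
    (X : Set (EuclideanSpace ℝ (Fin d)))
    (hXclosed : IsClosed X) (hXconv : Convex ℝ X)
    (x xhat ζ xplus xhatplus : EuclideanSpace ℝ (Fin d))
    (hx : x ∈ X)
    -- x̂ = prox_{φ/ρ̂}(x), a minimizer of g(y) + (ρ̂/2)‖y - x‖² over X:
    (hxhatX : xhat ∈ X)
    (hxhat : ∀ y ∈ X, g xhat + ρhat / 2 * ‖xhat - x‖ ^ 2 ≤ g y + ρhat / 2 * ‖y - x‖ ^ 2)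
    -- ζ ∈ ∂g(x) with ‖ζ‖ ≤ L:
    (hζ : ∀ y, g y + ρ / 2 * ‖y‖ ^ 2 ≥
      g x + ρ / 2 * ‖x‖ ^ 2 + (inner ℝ (ζ + ρ • x) (y - x) : ℝ))
    (hζL : ‖ζ‖ ≤ L)
    -- x⁺ = proj_X(x - αζ), the nearest point of X to x - αζ:
    (hxplusX : xplus ∈ X)
    (hxplus : ∀ y ∈ X, ‖xplus - (x - α • ζ)‖ ≤ ‖y - (x - α • ζ)‖)
    -- x̂⁺ is the minimizer defining the envelope value φ_{1/ρ̂}(x⁺):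
    (hxhatplusX : xhatplus ∈ X)
    (hxhatplus : ∀ y ∈ X, g xhatplus + ρhat / 2 * ‖xhatplus - xplus‖ ^ 2 ≤
      g y + ρhat / 2 * ‖y - xplus‖ ^ 2) :
    g xhatplus + ρhat / 2 * ‖xhatplus - xplus‖ ^ 2 ≤
      (g xhat + ρhat / 2 * ‖xhat - x‖ ^ 2)
        + ρhat * α * (g xhat - g x + ρ / 2 * ‖x - xhat‖ ^ 2)
        + α ^ 2 * ρhat / 2 * L ^ 2 := by
  set p : EuclideanSpace ℝ (Fin d) := x - α • ζ with hp
  -- variational inequality for the projection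
  have hnormeq : ‖p - xplus‖ = ⨅ w : X, ‖p - w‖ := by
    haveI : Nonempty X := ⟨⟨x, hx⟩⟩
    apply le_antisymm
    · apply le_ciInf
      intro w
      simpa [norm_sub_rev] using hxplus w w.2
    · exact ciInf_le ⟨0, fun _ ⟨_, h⟩ => h ▸ norm_nonneg _⟩ (⟨xplus, hxplusX⟩ : X)
  have hVI : ∀ w ∈ X, (inner ℝ (p - xplus) (w - xplus) : ℝ) ≤ 0 :=
    (norm_eq_iInf_iff_real_inner_le_zero hXconv hxplusX).mp hnormeq
  -- nonexpansive-type bound: ‖xhat - xplus‖² ≤ ‖xhat - p‖²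
  have key1 : ‖xhat - xplus‖ ^ 2 ≤ ‖xhat - p‖ ^ 2 := by
    have h1 := hVI xhat hxhatX
    have h2 : xhat - p = (xhat - xplus) - (p - xplus) := by abel
    have h3 : ‖(xhat - xplus) - (p - xplus)‖ ^ 2 =
        ‖xhat - xplus‖ ^ 2 - 2 * (inner ℝ (xhat - xplus) (p - xplus) : ℝ)
          + ‖p - xplus‖ ^ 2 := by
      rw [norm_sub_sq_real]
    have h4 : (inner ℝ (xhat - xplus) (p - xplus) : ℝ) ≤ 0 := by
      rwa [real_inner_comm]
    rw [h2, h3]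
    nlinarith [sq_nonneg (‖p - xplus‖)]
  -- expansion : ‖xhat - p‖² = ‖xhat - x‖² + 2α⟨xhat - x, ζ⟩ + α²‖ζ‖²
  have key2 : ‖xhat - p‖ ^ 2 = ‖xhat - x‖ ^ 2
      + 2 * (α * (inner ℝ (xhat - x) ζ : ℝ)) + α ^ 2 * ‖ζ‖ ^ 2 := by
    have h2 : xhat - p = (xhat - x) + α • ζ := by rw [hp]; abel
    rw [h2, norm_add_sq_real, real_inner_smul_right, norm_smul]
    simp [abs_of_pos hα, mul_pow]
  -- subgradient bound
  have key3 : (inner ℝ (xhat - x) ζ : ℝ) ≤ g xhat - g x + ρ / 2 * ‖x - xhat‖ ^ 2 := by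
    have h1 := hζ xhat
    rw [inner_add_left, real_inner_smul_left] at h1
    have h2 : ‖x - xhat‖ ^ 2 = ‖x‖ ^ 2 - 2 * (inner ℝ x xhat : ℝ) + ‖xhat‖ ^ 2 := by
      rw [norm_sub_sq_real]
    have h3 : (inner ℝ x (xhat - x) : ℝ) = (inner ℝ x xhat : ℝ) - ‖x‖ ^ 2 := by
      rw [inner_sub_right, real_inner_self_eq_norm_sq]
    have h4 : (inner ℝ (xhat - x) ζ : ℝ) = (inner ℝ ζ (xhat - x) : ℝ) := real_inner_comm _ _
    rw [h3] at h1
    nlinarith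
  -- combine
  have step0 := hxhatplus xhat hxhatX
  have hρhat0 : 0 < ρhat := lt_of_le_of_lt hρ hρhat
  have hζ2 : ‖ζ‖ ^ 2 ≤ L ^ 2 := by nlinarith [norm_nonneg ζ]
  calc g xhatplus + ρhat / 2 * ‖xhatplus - xplus‖ ^ 2
      ≤ g xhat + ρhat / 2 * ‖xhat - xplus‖ ^ 2 := step0
    _ ≤ g xhat + ρhat / 2 * ‖xhat - p‖ ^ 2 := by nlinarith
    _ = g xhat + ρhat / 2 * (‖xhat - x‖ ^ 2
          + 2 * (α * (inner ℝ (xhat - x) ζ : ℝ)) + α ^ 2 * ‖ζ‖ ^ 2) := by rw [key2]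
    _ ≤ (g xhat + ρhat / 2 * ‖xhat - x‖ ^ 2)
        + ρhat * α * (g xhat - g x + ρ / 2 * ‖x - xhat‖ ^ 2)
        + α ^ 2 * ρhat / 2 * L ^ 2 := by
          have t1 : ρhat * α * (inner ℝ (xhat - x) ζ : ℝ) ≤
              ρhat * α * (g xhat - g x + ρ / 2 * ‖x - xhat‖ ^ 2) :=
            mul_le_mul_of_nonneg_left key3 (le_of_lt (mul_pos hρhat0 hα))
          have t2 : α ^ 2 * ρhat / 2 * ‖ζ‖ ^ 2 ≤ α ^ 2 * ρhat / 2 * L ^ 2 := by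
            apply mul_le_mul_of_nonneg_left hζ2; positivity
          nlinarith [t1, t2]
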